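/- Let φ ∈ L¹(ℝ) be a low-pass filter with ∫|t||φ(t)| dt < ∞ and let φ_J(t) = 2^{−J} φ(2^{−J} t). Then for any x ∈ L²(ℝ) and c ∈ ℝ, ‖x ⋆ φ_J − (T_c x) ⋆ φ_J‖₂ ≤ |c| · 2^{−J} · ‖φ'‖₁ · ‖x‖₂, provided φ is differentiable with φ' ∈ L¹(ℝ). In particular the averaged coefficients become translation invariant as J → ∞. -/

import Mathlib

open MeasureTheory Set
open scoped ENNReal

lemma key_lintegral (G X : ℝ → ℝ≥0∞) (hG : Measurable G) (hX : Measurable X) :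
    ∫⁻ t, (∫⁻ s, G (t - s) * X s) ^ (2:ℝ)
      ≤ (∫⁻ u, G u) ^ (2:ℝ) * ∫⁻ s, (X s) ^ (2:ℝ) := by
  set K : ℝ≥0∞ := ∫⁻ u, G u with hK
  have hGts : ∀ t : ℝ, Measurable fun s : ℝ => G (t - s) := fun t =>
    hG.comp (measurable_const.sub measurable_id)
  have hKt : ∀ t : ℝ, ∫⁻ s, G (t - s) = K := fun t =>
    (Measure.measurePreserving_sub_left (volume : Measure ℝ) t).lintegral_comp hG
  have step1 : ∀ t : ℝ, (∫⁻ s, G (t - s) * X s)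
      ≤ K ^ ((1:ℝ)/2) * (∫⁻ s, G (t - s) * X s ^ (2:ℝ)) ^ ((1:ℝ)/2) := by
    intro t
    have hconj : Real.HolderConjugate 2 2 := ⟨by norm_num, by norm_num, by norm_num⟩
    have h := ENNReal.lintegral_mul_le_Lp_mul_Lq (volume : Measure ℝ) hconj
      (f := fun s => (G (t - s)) ^ ((1:ℝ)/2))
      (g := fun s => (G (t - s)) ^ ((1:ℝ)/2) * X s)
      ((hGts t).pow_const _).aemeasurable
      (((hGts t).pow_const _).mul hX).aemeasurable
    have heq : ∀ s : ℝ, ((fun s => (G (t - s)) ^ ((1:ℝ)/2)) *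
        (fun s => (G (t - s)) ^ ((1:ℝ)/2) * X s)) s = G (t - s) * X s := by
      intro s
      simp only [Pi.mul_apply, ← mul_assoc]
      rw [← ENNReal.rpow_add_of_nonneg _ _ (by norm_num) (by norm_num)]
      norm_num
    rw [lintegral_congr heq] at h
    refine h.trans_eq ?_
    congr 1
    · rw [← hKt t]
      congr 1
      refine lintegral_congr fun s => ?_
      rw [← ENNReal.rpow_mul]
      norm_num
    · congr 1
      refine lintegral_congr fun s => ?_
      rw [ENNReal.mul_rpow_of_nonneg _ _ (by norm_num : (0:ℝ) ≤ 2), ← ENNReal.rpow_mul]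
      norm_num
  calc ∫⁻ t, (∫⁻ s, G (t - s) * X s) ^ (2:ℝ)
      ≤ ∫⁻ t, K * ∫⁻ s, G (t - s) * X s ^ (2:ℝ) := by
        refine lintegral_mono fun t => ?_
        refine le_trans (ENNReal.rpow_le_rpow (step1 t) (by norm_num)) ?_
        rw [ENNReal.mul_rpow_of_nonneg _ _ (by norm_num : (0:ℝ) ≤ 2),
          ← ENNReal.rpow_mul, ← ENNReal.rpow_mul]
        norm_num
    _ = K * ∫⁻ t, ∫⁻ s, G (t - s) * X s ^ (2:ℝ) := lintegral_const_mul _ <| by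
        exact (hG.comp (measurable_fst.sub measurable_snd)).mul
          ((hX.comp measurable_snd).pow_const _) |>.lintegral_prod_right'
    _ = K * ∫⁻ s, ∫⁻ t, G (t - s) * X s ^ (2:ℝ) := by
        rw [lintegral_lintegral_swap]
        exact ((hG.comp (measurable_fst.sub measurable_snd)).mul
          ((hX.comp measurable_snd).pow_const _)).aemeasurable
    _ = K * ∫⁻ s, K * X s ^ (2:ℝ) := by
        congr 1
        refine lintegral_congr fun s => ?_
        rw [lintegral_mul_const _ (show Measurable fun t : ℝ => G (t - s) from hG.comp (measurable_id.sub measurable_const)),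
          lintegral_sub_right_eq_self G s, mul_comm]
    _ = K ^ (2:ℝ) * ∫⁻ s, X s ^ (2:ℝ) := by
        rw [lintegral_const_mul _ (hX.pow_const _), ← mul_assoc]
        congr 1
        rw [show (2:ℝ) = ((2:ℕ):ℝ) by norm_num, ENNReal.rpow_natCast, sq]

lemma ae_integrable_conv (ψ : ℝ → ℝ) (hψc : Continuous ψ) (hψi : Integrable ψ)
    (x : ℝ → ℂ) (hxm : StronglyMeasurable x) (hx2 : eLpNorm x 2 volume < ⊤) :
    ∀ᵐ t : ℝ, Integrable (fun s => ψ (t - s) • x s) := by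
  set G : ℝ → ℝ≥0∞ := fun u => ‖ψ u‖₊ with hGdef
  set X : ℝ → ℝ≥0∞ := fun s => ‖x s‖₊ with hXdef
  have hG : Measurable G := hψc.measurable.enorm
  have hX : Measurable X := hxm.measurable.enorm
  have hXfin : ∫⁻ s, X s ^ (2:ℝ) < ⊤ := by
    rw [eLpNorm_eq_lintegral_rpow_enorm_toReal (by norm_num) (by norm_num)] at hx2
    rw [show ((2:ℝ≥0∞).toReal) = (2:ℝ) by norm_num] at hx2
    exact (ENNReal.rpow_lt_top_iff_of_pos (by norm_num : (0:ℝ) < 1/2)).mp hx2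
  have hGfin : ∫⁻ u, G u < ⊤ := hψi.2
  have hfin : ∫⁻ t, (∫⁻ s, G (t - s) * X s) ^ (2:ℝ) < ⊤ := by
    refine lt_of_le_of_lt (key_lintegral G X hG hX) ?_
    exact ENNReal.mul_lt_top
      (ENNReal.rpow_lt_top_of_nonneg (by norm_num) hGfin.ne) hXfin
  have hmeas : Measurable fun t : ℝ => (∫⁻ s, G (t - s) * X s) ^ (2:ℝ) :=
    (((hG.comp (measurable_fst.sub measurable_snd)).mul
      (hX.comp measurable_snd)).lintegral_prod_right').pow_const _
  have hae := ae_lt_top hmeas hfin.ne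
  refine hae.mono fun t ht => ?_
  have ht' : ∫⁻ s, G (t - s) * X s < ⊤ :=
    (ENNReal.rpow_lt_top_iff_of_pos (by norm_num : (0:ℝ) < 2)).mp ht
  refine ⟨((hψc.comp (continuous_const.sub continuous_id)).stronglyMeasurable.smul
    hxm).aestronglyMeasurable, ?_⟩
  have heq : ∀ s : ℝ, (‖ψ (t - s) • x s‖₊ : ℝ≥0∞) = G (t - s) * X s := fun s => by
    rw [nnnorm_smul, ENNReal.coe_mul]
  show ∫⁻ s, (‖ψ (t - s) • x s‖₊ : ℝ≥0∞) < ⊤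
  rw [lintegral_congr heq]
  exact ht'

lemma lintegral_norm_sub_translate_le (ψ ψd : ℝ → ℝ)
    (hd : ∀ u, HasDerivAt ψ (ψd u) u) (hmd : Measurable ψd)
    (hint : Integrable ψd) (c : ℝ) :
    ∫⁻ u, (‖ψ u - ψ (u - c)‖₊ : ℝ≥0∞)
      ≤ ENNReal.ofReal |c| * ∫⁻ r, (‖ψd r‖₊ : ℝ≥0∞) := by
  set S : Set (ℝ × ℝ) := {p : ℝ × ℝ | p.2 ∈ Set.uIoc (p.1 - c) p.1} with hS
  have hSmeas : MeasurableSet S := by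
    have : S = {p : ℝ × ℝ | (p.1 - c) ⊓ p.1 < p.2} ∩ {p | p.2 ≤ (p.1 - c) ⊔ p.1} := by
      ext p
      simp [hS, Set.uIoc, Set.mem_Ioc, Set.mem_setOf_eq]
    rw [this]
    exact (measurableSet_lt ((measurable_fst.sub measurable_const).min measurable_fst)
        measurable_snd).inter
      (measurableSet_le measurable_snd ((measurable_fst.sub measurable_const).max measurable_fst))
  have hFmeas : Measurable (S.indicator fun p : ℝ × ℝ => (‖ψd p.2‖₊ : ℝ≥0∞)) :=
    ((hmd.comp measurable_snd).enorm).indicator hSmeas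
  have hpt : ∀ u : ℝ, (‖ψ u - ψ (u - c)‖₊ : ℝ≥0∞)
      ≤ ∫⁻ r in Set.uIoc (u - c) u, (‖ψd r‖₊ : ℝ≥0∞) := by
    intro u
    have hftc : ∫ r in (u - c)..u, ψd r = ψ u - ψ (u - c) :=
      intervalIntegral.integral_eq_sub_of_hasDerivAt (fun r _ => hd r)
        hint.intervalIntegrable
    have h1 : ‖ψ u - ψ (u - c)‖ ≤ ∫ r in Set.uIoc (u - c) u, ‖ψd r‖ := by
      rw [← hftc]
      exact intervalIntegral.norm_integral_le_integral_norm_uIoc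
    calc (‖ψ u - ψ (u - c)‖₊ : ℝ≥0∞) = ENNReal.ofReal ‖ψ u - ψ (u - c)‖ :=
          (ofReal_norm_eq_enorm _).symm
      _ ≤ ENNReal.ofReal (∫ r in Set.uIoc (u - c) u, ‖ψd r‖) := ENNReal.ofReal_le_ofReal h1
      _ = ∫⁻ r in Set.uIoc (u - c) u, ENNReal.ofReal ‖ψd r‖ :=
          ofReal_integral_eq_lintegral_ofReal hint.norm.restrict
            (Filter.Eventually.of_forall fun r => norm_nonneg _)
      _ = ∫⁻ r in Set.uIoc (u - c) u, (‖ψd r‖₊ : ℝ≥0∞) := by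
          refine lintegral_congr fun r => ?_
          rw [ofReal_norm_eq_enorm, enorm_eq_nnnorm]
  calc ∫⁻ u, (‖ψ u - ψ (u - c)‖₊ : ℝ≥0∞)
      ≤ ∫⁻ u, ∫⁻ r in Set.uIoc (u - c) u, (‖ψd r‖₊ : ℝ≥0∞) := lintegral_mono hpt
    _ = ∫⁻ u, ∫⁻ r, S.indicator (fun p : ℝ × ℝ => (‖ψd p.2‖₊ : ℝ≥0∞)) (u, r) := by
        refine lintegral_congr fun u => ?_
        rw [← lintegral_indicator measurableSet_uIoc]
        refine lintegral_congr fun r => ?_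
        by_cases h : r ∈ Set.uIoc (u - c) u <;>
          simp [Set.indicator_apply, hS, Set.mem_setOf_eq, h]
    _ = ∫⁻ r, ∫⁻ u, S.indicator (fun p : ℝ × ℝ => (‖ψd p.2‖₊ : ℝ≥0∞)) (u, r) := by
        refine lintegral_lintegral_swap ?_
        exact hFmeas.aemeasurable
    _ = ∫⁻ r, (‖ψd r‖₊ : ℝ≥0∞) * ENNReal.ofReal |c| := by
        refine lintegral_congr fun r => ?_
        have hiff : ∀ u : ℝ, ((u, r) ∈ S) ↔ u ∈ Set.Ico r (r + c) ∪ Set.Ico (r + c) r := by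
          intro u
          simp only [hS, Set.mem_setOf_eq, Set.mem_uIoc, Set.mem_union, Set.mem_Ico]
          constructor
          · rintro (⟨h1, h2⟩ | ⟨h1, h2⟩)
            · exact Or.inl ⟨h2, by linarith⟩
            · exact Or.inr ⟨by linarith, h1⟩
          · rintro (⟨h1, h2⟩ | ⟨h1, h2⟩)
            · exact Or.inl ⟨by linarith, h1⟩
            · exact Or.inr ⟨h2, by linarith⟩
        have hfun : (fun u : ℝ => S.indicator (fun p : ℝ × ℝ => (‖ψd p.2‖₊ : ℝ≥0∞)) (u, r))
            = (Set.Ico r (r + c) ∪ Set.Ico (r + c) r).indicator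
                (fun _ => (‖ψd r‖₊ : ℝ≥0∞)) := by
          funext u
          by_cases h : (u, r) ∈ S
          · rw [Set.indicator_of_mem h, Set.indicator_of_mem ((hiff u).mp h)]
          · rw [Set.indicator_of_notMem h,
              Set.indicator_of_notMem (fun hmem => h ((hiff u).mpr hmem))]
        rw [hfun, lintegral_indicator_const (measurableSet_Ico.union measurableSet_Ico)]
        congr 1
        rcases le_or_gt 0 c with hc | hc
        · rw [Set.Ico_eq_empty (by intro h; linarith : ¬ r + c < r), Set.union_empty,
            Real.volume_Ico, abs_of_nonneg hc]
          congr 1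
          ring
        · rw [Set.Ico_eq_empty (by intro h; linarith : ¬ r < r + c), Set.empty_union,
            Real.volume_Ico, abs_of_neg hc]
          congr 1
          ring
    _ = ENNReal.ofReal |c| * ∫⁻ r, (‖ψd r‖₊ : ℝ≥0∞) := by
        rw [lintegral_mul_const (f := fun r => (‖ψd r‖₊ : ℝ≥0∞)) _ hmd.enorm, mul_comm]
/-- Translation-invariance rate of the averaged (low-pass) coefficients:
`‖x ⋆ φ_J − (T_c x) ⋆ φ_J‖₂ ≤ |c| · 2^{−J} · ‖φ'‖₁ · ‖x‖₂`. -/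
theorem lowpass_translation_invariance
    (φ : ℝ → ℝ) (hφ : Integrable φ (volume : Measure ℝ))
    (hφmom : Integrable (fun t => |t| * |φ t|) (volume : Measure ℝ))
    (hφdiff : Differentiable ℝ φ)
    (hφ' : Integrable (deriv φ) (volume : Measure ℝ))
    (J : ℕ) (x : ℝ → ℂ) (hx : MemLp x 2 (volume : Measure ℝ)) (c : ℝ) :
    eLpNorm
      (fun t => (∫ s, ((2:ℝ)^(-(J:ℝ)) * φ ((2:ℝ)^(-(J:ℝ)) * (t - s))) • x s)
        - ∫ s, ((2:ℝ)^(-(J:ℝ)) * φ ((2:ℝ)^(-(J:ℝ)) * (t - s))) • x (s - c))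
      2 (volume : Measure ℝ)
    ≤ ENNReal.ofReal (|c| * (2:ℝ)^(-(J:ℝ)) * ∫ t, |deriv φ t|)
        * eLpNorm x 2 (volume : Measure ℝ) := by
  set a : ℝ := (2:ℝ)^(-(J:ℝ)) with ha
  have ha0 : 0 < a := Real.rpow_pos_of_pos two_pos _
  set ψ : ℝ → ℝ := fun u => a * φ (a * u) with hψdef
  have hψc : Continuous ψ :=
    continuous_const.mul (hφdiff.continuous.comp (continuous_const.mul continuous_id))
  have hψi : Integrable ψ := (hφ.comp_mul_left' ha0.ne').const_mul a
  set ψd : ℝ → ℝ := fun u => a * (deriv φ (a * u) * a) with hψddef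
  have hd : ∀ u, HasDerivAt ψ (ψd u) u := by
    intro u
    have h1 : HasDerivAt (fun v : ℝ => a * v) a u := by
      simpa using (hasDerivAt_id u).const_mul a
    have h2 := ((hφdiff (a * u)).hasDerivAt.comp u h1)
    simpa [hψdef, Function.comp] using h2.const_mul a
  have hmd : Measurable ψd :=
    measurable_const.mul (((measurable_deriv φ).comp (measurable_id.const_mul a)).mul
      measurable_const)
  have hψdi : Integrable ψd := ((hφ'.comp_mul_left' ha0.ne').mul_const a).const_mul a
  -- replace x by a strongly measurable representative
  set x' : ℝ → ℂ := hx.1.mk x with hx'def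
  have hx'm : StronglyMeasurable x' := hx.1.stronglyMeasurable_mk
  have hxx' : x =ᵐ[volume] x' := hx.1.ae_eq_mk
  have hx'eq : eLpNorm x' 2 volume = eLpNorm x 2 volume := eLpNorm_congr_ae hxx'.symm
  have hx'fin : eLpNorm x' 2 volume < ⊤ := hx'eq ▸ hx.2
  have hshift : (fun s => x (s - c)) =ᵐ[volume] fun s => x' (s - c) :=
    (measurePreserving_sub_right volume c).quasiMeasurePreserving.tendsto_ae.eventually
      hxx'
  set D : ℝ → ℂ := fun t => (∫ s, ψ (t - s) • x' s) - ∫ s, ψ (t - s) • x' (s - c) with hDdef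
  have hfun : (fun t => (∫ s, (a * φ (a * (t - s))) • x s)
      - ∫ s, (a * φ (a * (t - s))) • x (s - c)) = D := by
    funext t
    have e1 : ∫ s, (a * φ (a * (t - s))) • x s = ∫ s, ψ (t - s) • x' s :=
      integral_congr_ae (hxx'.mono fun s hs =>
        show (a * φ (a * (t - s))) • x s = ψ (t - s) • x' s by rw [show x s = x' s from hs])
    have e2 : ∫ s, (a * φ (a * (t - s))) • x (s - c) = ∫ s, ψ (t - s) • x' (s - c) :=
      integral_congr_ae (hshift.mono fun s hs =>
        show (a * φ (a * (t - s))) • x (s - c) = ψ (t - s) • x' (s - c) by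
          rw [show x (s - c) = x' (s - c) from hs])
    rw [hDdef]
    dsimp only
    rw [e1, e2]
  rw [hfun]
  -- the difference kernel
  set g : ℝ → ℝ := fun u => ψ u - ψ (u - c) with hgdef
  have hgc : Continuous g := hψc.sub (hψc.comp (continuous_id.sub continuous_const))
  set G : ℝ → ℝ≥0∞ := fun u => (‖g u‖₊ : ℝ≥0∞) with hGdef
  set X : ℝ → ℝ≥0∞ := fun s => (‖x' s‖₊ : ℝ≥0∞) with hXdef
  have hG : Measurable G := hgc.measurable.enorm
  have hX : Measurable X := hx'm.measurable.enorm
  have hae1 : ∀ᵐ t : ℝ, Integrable (fun s => ψ (t - s) • x' s) :=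
    ae_integrable_conv ψ hψc hψi x' hx'm hx'fin
  have hae2 : ∀ᵐ t : ℝ, Integrable (fun s => ψ (t - c - s) • x' s) :=
    (measurePreserving_sub_right volume c).quasiMeasurePreserving.tendsto_ae.eventually
      hae1
  have hDbound : ∀ᵐ t : ℝ, (‖D t‖₊ : ℝ≥0∞) ≤ ∫⁻ s, G (t - s) * X s := by
    filter_upwards [hae1, hae2] with t h1 h2
    have h2' : Integrable (fun s => ψ (t - s - c) • x' s) := by
      have hfe : (fun s => ψ (t - s - c) • x' s) = fun s => ψ (t - c - s) • x' s := by
        funext s; rw [sub_right_comm]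
      rw [hfe]; exact h2
    have hch : ∫ s, ψ (t - s) • x' (s - c) = ∫ s, ψ (t - s - c) • x' s := by
      have h0 : (fun s => ψ (t - s) • x' (s - c))
          = fun s => ψ (t - (s - c) - c) • x' (s - c) := by
        funext s; rw [show t - (s - c) - c = t - s from by ring]
      rw [h0]
      exact integral_sub_right_eq_self (fun s => ψ (t - s - c) • x' s) c
    have hDt : D t = ∫ s, g (t - s) • x' s := by
      rw [hDdef]
      dsimp only
      rw [hch, ← integral_sub h1 h2']
      refine integral_congr_ae (Filter.Eventually.of_forall fun s => ?_)
      rw [hgdef]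
      dsimp only
      rw [sub_smul]
    rw [hDt]
    refine le_trans (enorm_integral_le_lintegral_enorm _) ?_
    refine le_of_eq (lintegral_congr fun s => ?_)
    rw [enorm_eq_nnnorm, nnnorm_smul, ENNReal.coe_mul]
  -- the L² bound
  set Kg : ℝ≥0∞ := ∫⁻ u, G u with hKg
  have hL2 : eLpNorm D 2 volume ≤ Kg * eLpNorm x' 2 volume := by
    rw [eLpNorm_eq_lintegral_rpow_enorm_toReal (by norm_num) (by norm_num),
      eLpNorm_eq_lintegral_rpow_enorm_toReal (by norm_num) (by norm_num),
      show ((2:ℝ≥0∞).toReal) = (2:ℝ) by norm_num]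
    have hmono : ∫⁻ t, (‖D t‖₊ : ℝ≥0∞) ^ (2:ℝ)
        ≤ ∫⁻ t, (∫⁻ s, G (t - s) * X s) ^ (2:ℝ) :=
      lintegral_mono_ae (hDbound.mono fun t ht => ENNReal.rpow_le_rpow ht (by norm_num))
    refine le_trans (ENNReal.rpow_le_rpow (hmono.trans (key_lintegral G X hG hX))
      (by norm_num : (0:ℝ) ≤ 1/2)) ?_
    rw [ENNReal.mul_rpow_of_nonneg _ _ (by norm_num : (0:ℝ) ≤ 1/2), ← ENNReal.rpow_mul]
    norm_num
    exact le_rfl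
  have hKgle : Kg ≤ ENNReal.ofReal (|c| * a * ∫ t, |deriv φ t|) := by
    refine le_trans (lintegral_norm_sub_translate_le ψ ψd hd hmd hψdi c) ?_
    have hie : ∫⁻ r, (‖ψd r‖₊ : ℝ≥0∞) = ENNReal.ofReal (∫ r, ‖ψd r‖) :=
      (ofReal_integral_norm_eq_lintegral_enorm hψdi).symm
    rw [hie, ← ENNReal.ofReal_mul (abs_nonneg c)]
    refine ENNReal.ofReal_le_ofReal ?_
    have hnorm : ∫ r, ‖ψd r‖ = a * ∫ t, |deriv φ t| := by
      have e1 : ∀ r : ℝ, ‖ψd r‖ = a * a * |deriv φ (a * r)| := by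
        intro r
        rw [hψddef]
        dsimp only
        rw [Real.norm_eq_abs, abs_mul, abs_mul, abs_of_pos ha0]
        ring
      rw [integral_congr_ae (Filter.Eventually.of_forall e1)]
      rw [integral_const_mul]
      rw [Measure.integral_comp_mul_left (fun y => |deriv φ y|) a]
      rw [abs_of_pos (inv_pos.mpr ha0), smul_eq_mul]
      field_simp
    rw [hnorm, ← mul_assoc]
  calc eLpNorm D 2 volume ≤ Kg * eLpNorm x' 2 volume := hL2
    _ = Kg * eLpNorm x 2 volume := by rw [hx'eq]
    _ ≤ ENNReal.ofReal (|c| * a * ∫ t, |deriv φ t|) * eLpNorm x 2 volume :=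
        mul_le_mul_left hKgle _
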